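/- Let n be a positive integer, S ≥ 0 a real number, and λ, μ ∈ ℝ. There exists a natural number k with 0 ≤ k < n such that for all nonnegative reals d₁,…,dₙ with Σᵢ dᵢ = S, one has λ·Σᵢ dᵢ² + μ·Σᵢ dᵢ³ ≥ λ·(n-k)·(S/(n-k))² + μ·(n-k)·(S/(n-k))³; that is, the function λs₂ + μs₃ on the simplex {d ∈ ℝⁿ : dᵢ ≥ 0, Σdᵢ = S} attains its minimum at a point with k coordinates equal to 0 and the remaining n-k coordinates equal to S/(n-k). -/

import Mathlib

set_option linter.unnecessarySimpa false


open Finset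

private lemma sum_comp_update {n : ℕ} (f : ℝ → ℝ) (e : Fin n → ℝ) (j : Fin n) (b : ℝ) :
    ∑ k, f (Function.update e j b k) = (∑ k, f (e k)) - f (e j) + f b := by
  classical
  have h1 : ∀ k, f (Function.update e j b k) = Function.update (f ∘ e) j (f b) k := by
    intro k
    by_cases hk : k = j
    · subst hk; simp
    · simp [Function.update_of_ne hk]
  rw [Finset.sum_congr rfl fun k _ => h1 k,
    Finset.sum_update_of_mem (Finset.mem_univ j)]
  have h2 : ∑ k, f (e k) = (∑ k ∈ Finset.univ \ {j}, f (e k)) + f (e j) := by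
    have := Finset.sum_eq_sum_sdiff_singleton_add (Finset.mem_univ j) (fun k => f (e k))
    simpa using this
  rw [h2]
  simp [Function.comp]
  ring

private lemma sum_comp_update2 {n : ℕ} (f : ℝ → ℝ) (d : Fin n → ℝ) {i j : Fin n}
    (hij : i ≠ j) (a b : ℝ) :
    ∑ k, f (Function.update (Function.update d i a) j b k)
      = (∑ k, f (d k)) - f (d i) - f (d j) + f a + f b := by
  rw [sum_comp_update, sum_comp_update, Function.update_of_ne (Ne.symm hij)]
  ring

theorem min_of_power_sums_on_simplex
    (n : ℕ) (hn : 0 < n) (S : ℝ) (hS : 0 ≤ S) (lam mu : ℝ) :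
    ∃ k : ℕ, k < n ∧ ∀ d : Fin n → ℝ, (∀ i, 0 ≤ d i) → ∑ i, d i = S →
      lam * ((n : ℝ) - k) * (S / ((n : ℝ) - k)) ^ 2
        + mu * ((n : ℝ) - k) * (S / ((n : ℝ) - k)) ^ 3 ≤
      lam * ∑ i, (d i) ^ 2 + mu * ∑ i, (d i) ^ 3 := by
  classical
  rcases eq_or_lt_of_le hS with hS0 | hSpos
  · -- S = 0 : everything is zero
    refine ⟨0, hn, ?_⟩
    intro d hd hsum
    have hz : ∀ i, d i = 0 := by
      intro i
      exact (Finset.sum_eq_zero_iff_of_nonneg (fun i _ => hd i)).1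
        (by rw [hsum, ← hS0]) i (mem_univ i)
    simp [hz, ← hS0]
  · -- S > 0
    set h : ℝ → ℝ := fun t => lam * t ^ 2 + mu * t ^ 3 with hh
    set G : (Fin n → ℝ) → ℝ := fun d => ∑ k, h (d k) with hGdef
    set A : Set (Fin n → ℝ) := {d | (∀ i, 0 ≤ d i) ∧ ∑ i, d i = S} with hAdef
    have hGsplit : ∀ d : Fin n → ℝ, G d = lam * ∑ i, (d i) ^ 2 + mu * ∑ i, (d i) ^ 3 := by
      intro d
      simp only [hGdef, hh, Finset.sum_add_distrib, Finset.mul_sum]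
    -- compactness of A
    have hA_closed : IsClosed A := by
      have e1 : A = {d : Fin n → ℝ | ∀ i, 0 ≤ d i} ∩ {d | ∑ i, d i = S} := by
        ext d; simp [hAdef, Set.mem_setOf_eq, Set.mem_inter_iff]
      rw [e1]
      refine IsClosed.inter ?_ ?_
      · have : {d : Fin n → ℝ | ∀ i, 0 ≤ d i} = ⋂ i, {d | 0 ≤ d i} := by
          ext d; simp
        rw [this]
        exact isClosed_iInter fun i => isClosed_le continuous_const (continuous_apply i)
      · exact isClosed_eq (by continuity) continuous_const
    have hA_bdd : Bornology.IsBounded A := by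
      rw [isBounded_iff_forall_norm_le]
      refine ⟨S, ?_⟩
      rintro d ⟨hd, hsum⟩
      rw [pi_norm_le_iff_of_nonneg hS]
      intro i
      rw [Real.norm_eq_abs, abs_of_nonneg (hd i)]
      calc d i ≤ ∑ k, d k := Finset.single_le_sum (fun k _ => hd k) (mem_univ i)
        _ = S := hsum
    have hA_cpt : IsCompact A := Metric.isCompact_of_isClosed_isBounded hA_closed hA_bdd
    have hA_ne : A.Nonempty := by
      refine ⟨fun _ => S / n, fun i => by positivity, ?_⟩
      rw [Finset.sum_const, Finset.card_univ, Fintype.card_fin, nsmul_eq_mul]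
      have hn' : (n : ℝ) ≠ 0 := Nat.cast_ne_zero.2 hn.ne'
      field_simp
    have hGcont : Continuous G := by
      apply continuous_finset_sum
      intro k _
      exact (continuous_const.mul ((continuous_apply k).pow 2)).add
        (continuous_const.mul ((continuous_apply k).pow 3))
    obtain ⟨d₀, hd₀A, hd₀min'⟩ := hA_cpt.exists_isMinOn hA_ne hGcont.continuousOn
    have hd₀min : ∀ e ∈ A, G d₀ ≤ G e := fun e he => isMinOn_iff.1 hd₀min' e he
    -- choose a minimizer with minimal support
    set suppCard : (Fin n → ℝ) → ℕ := fun d => (univ.filter fun i => d i ≠ 0).card with hsc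
    set P : ℕ → Prop := fun N => ∃ d, d ∈ A ∧ (∀ e ∈ A, G d ≤ G e) ∧ suppCard d = N with hP
    have hPex : ∃ N, P N := ⟨suppCard d₀, d₀, hd₀A, hd₀min, rfl⟩
    obtain ⟨w, hwA, hwmin, hwcard⟩ := Nat.find_spec hPex
    set N := Nat.find hPex with hNdef
    have hNle : ∀ M, P M → N ≤ M := fun M hM => Nat.find_min' hPex hM
    -- all positive coordinates of w are equal
    have hpair : ∀ i j, i ≠ j → 0 < w i → 0 < w j → w i = w j := by
      intro i j hij hi hj
      by_contra hne
      set x := w i with hx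
      set y := w j with hy
      set c := 2 * lam + 3 * mu * (x + y) with hc
      have hGdiff : ∀ a b : ℝ,
          G (Function.update (Function.update w i a) j b)
            = G w - h x - h y + h a + h b := by
        intro a b
        simpa [hGdef] using sum_comp_update2 h w hij a b
      have hmem : ∀ a b : ℝ, 0 ≤ a → 0 ≤ b → a + b = x + y →
          Function.update (Function.update w i a) j b ∈ A := by
        intro a b ha hb hab
        constructor
        · intro k
          rcases eq_or_ne k j with rfl | hkj
          · simpa using hb
          · rw [Function.update_of_ne hkj]
            rcases eq_or_ne k i with rfl | hki
            · simpa using ha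
            · rw [Function.update_of_ne hki]; exact hwA.1 k
        · have e1 := sum_comp_update2 (fun t => t) w hij a b
          rw [e1, hwA.2]
          linarith
      have hGmerge : G (Function.update (Function.update w i (x + y)) j 0)
          = G w + x * y * c := by
        rw [hGdiff]; simp only [hh, hc]; ring
      rcases lt_trichotomy c 0 with hclt | hc0 | hcgt
      · -- merge strictly decreases G : contradiction
        have hlt : G (Function.update (Function.update w i (x + y)) j 0) < G w := by
          rw [hGmerge]
          nlinarith [mul_pos hi hj]
        exact absurd (hwmin _ (hmem (x + y) 0 (by positivity) le_rfl (by ring))) (not_le.2 hlt)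
      · -- c = 0 : merging keeps G but strictly lowers support : contradiction
        have hGm : G (Function.update (Function.update w i (x + y)) j 0) = G w := by
          rw [hGmerge, hc0]; ring
        have hw'A : Function.update (Function.update w i (x + y)) j 0 ∈ A :=
          hmem (x + y) 0 (by positivity) le_rfl (by ring)
        have hw'min : ∀ e ∈ A, G (Function.update (Function.update w i (x + y)) j 0) ≤ G e :=
          fun e he => hGm ▸ hwmin e he
        have hsub : (univ.filter fun k => Function.update (Function.update w i (x + y)) j 0 k ≠ 0)
            ⊆ (univ.filter fun k => w k ≠ 0).erase j := by
          intro k hk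
          simp only [Finset.mem_filter, Finset.mem_univ, true_and] at hk
          have hkj : k ≠ j := by
            rintro rfl
            exact hk (by simp)
          refine Finset.mem_erase.2 ⟨hkj, Finset.mem_filter.2 ⟨Finset.mem_univ _, ?_⟩⟩
          rw [Function.update_of_ne hkj] at hk
          rcases eq_or_ne k i with rfl | hki
          · exact ne_of_gt hi
          · rwa [Function.update_of_ne hki] at hk
        have hjmem : j ∈ univ.filter fun k => w k ≠ 0 := by
          simp; exact hj.ne'
        have hlt : suppCard (Function.update (Function.update w i (x + y)) j 0) < N := by
          calc suppCard (Function.update (Function.update w i (x + y)) j 0)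
              ≤ ((univ.filter fun k => w k ≠ 0).erase j).card := Finset.card_le_card hsub
            _ < (univ.filter fun k => w k ≠ 0).card := Finset.card_erase_lt_of_mem hjmem
            _ = N := hwcard
        exact absurd (hNle _ ⟨_, hw'A, hw'min, rfl⟩) (not_le.2 hlt)
      · -- c > 0 : equalizing strictly decreases G : contradiction
        have hGeq : G (Function.update (Function.update w i ((x + y)/2)) j ((x + y)/2))
            = G w - (x - y) ^ 2 * c / 4 := by
          rw [hGdiff]; simp only [hh, hc]; ring
        have hxy : x - y ≠ 0 := sub_ne_zero.2 hne
        have hsq : 0 < (x - y) ^ 2 := by positivity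
        have hlt : G (Function.update (Function.update w i ((x + y)/2)) j ((x + y)/2)) < G w := by
          rw [hGeq]
          nlinarith
        exact absurd (hwmin _ (hmem _ _ (by positivity) (by positivity) (by ring))) (not_le.2 hlt)
    -- structure of w : N equal positive coordinates
    set T : Finset (Fin n) := univ.filter fun i => w i ≠ 0 with hT
    have hTcard : T.card = N := hwcard
    have hTne : T.Nonempty := by
      by_contra hemp
      rw [Finset.not_nonempty_iff_eq_empty] at hemp
      have hz : ∑ i, w i = 0 := Finset.sum_eq_zero fun i _ => by
        by_contra hne
        have : i ∈ T := by simp [hT, hne]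
        rw [hemp] at this
        exact absurd this (Finset.notMem_empty i)
      rw [hwA.2] at hz
      linarith
    have hN1 : 1 ≤ N := by rw [← hTcard]; exact Finset.card_pos.2 hTne
    have hNn : N ≤ n := by
      rw [← hTcard]
      calc T.card ≤ (univ : Finset (Fin n)).card := Finset.card_le_card (Finset.filter_subset _ _)
        _ = n := by simp
    obtain ⟨i₀, hi₀⟩ := hTne
    have hpos : ∀ i ∈ T, 0 < w i := by
      intro i hi
      have := (Finset.mem_filter.1 hi).2
      exact lt_of_le_of_ne (hwA.1 i) (Ne.symm this)
    have hval : ∀ i ∈ T, w i = w i₀ := by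
      intro i hi
      rcases eq_or_ne i i₀ with rfl | hne
      · rfl
      · exact hpair i i₀ hne (hpos i hi) (hpos i₀ hi₀)
    have hNne : (N : ℝ) ≠ 0 := by
      exact_mod_cast (Nat.one_le_iff_ne_zero.1 hN1)
    have hsumT : ∑ i ∈ T, w i = S := by
      rw [hT, Finset.sum_filter_ne_zero]
      exact hwA.2
    have hv : w i₀ = S / N := by
      have e1 : ∑ i ∈ T, w i = N * w i₀ := by
        rw [Finset.sum_congr rfl hval, Finset.sum_const, hTcard, nsmul_eq_mul]
      rw [e1] at hsumT
      rw [eq_div_iff hNne]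
      linarith
    have hGw : G w = N * h (S / N) := by
      have h0 : h 0 = 0 := by simp [hh]
      have e2 : G w = ∑ i ∈ T, h (w i) := by
        rw [hGdef]
        refine (Finset.sum_subset (Finset.filter_subset _ _) ?_).symm
        intro x _ hx
        simp only [hT, Finset.mem_filter, Finset.mem_univ, true_and, not_not] at hx
        rw [hx, h0]
      rw [e2, Finset.sum_congr rfl (fun i hi => by rw [hval i hi, hv]),
        Finset.sum_const, hTcard, nsmul_eq_mul]
    refine ⟨n - N, Nat.sub_lt hn hN1, ?_⟩
    intro d hd hsum
    have hcast : ((n : ℝ) - ((n - N : ℕ) : ℝ)) = (N : ℝ) := by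
      rw [Nat.cast_sub hNn]; ring
    rw [hcast]
    have e3 : lam * (N:ℝ) * (S / N) ^ 2 + mu * (N:ℝ) * (S / N) ^ 3 = (N:ℝ) * h (S / N) := by
      simp only [hh]; ring
    rw [e3, ← hGw, ← hGsplit d]
    exact hwmin d ⟨hd, hsum⟩
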